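/- For two elements α, β of AO_n of rank n-1, α and β are J-related in AO_n if and only if d(α) and d(β) have the same parity. -/

import Mathlib

/-- Partial transformations on `Fin n`, represented as `Option`-valued maps. -/
abbrev PT (n : ℕ) := Fin n → Option (Fin n)

/-- Left-to-right composition of partial maps: `x (pcomp f g) = (x f) g`. -/
def pcomp {n : ℕ} (f g : PT n) : PT n := fun x => (f x).bind g

/-- The identity partial map. -/
def pid (n : ℕ) : PT n := fun x => some x

instance PTMonoid (n : ℕ) : Monoid (PT n) where
  mul := pcomp
  one := pid n
  mul_assoc f g h := funext fun x => by
    show ((f x).bind g).bind h = (f x).bind fun y => (g y).bind h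
    cases f x <;> rfl
  one_mul f := rfl
  mul_one f := funext fun x => by
    show (f x).bind (fun y => some y) = f x
    cases f x <;> rfl

/-- `f` is injective on its domain. -/
def pInj {n : ℕ} (f : PT n) : Prop := ∀ x y a, f x = some a → f y = some a → x = y

/-- The domain of a partial map. -/
def pDom {n : ℕ} (f : PT n) : Finset (Fin n) := Finset.univ.filter fun x => (f x).isSome

/-- The image of a partial map. -/
def pIm {n : ℕ} (f : PT n) : Finset (Fin n) := Finset.univ.filter fun b => ∃ x, f x = some b

/-- The rank of a partial map is the size of its domain. -/
def prank {n : ℕ} (f : PT n) : ℕ := (pDom f).card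

/-- Order-preserving partial maps. -/
def orderPres {n : ℕ} (f : PT n) : Prop :=
  ∀ x y a b, f x = some a → f y = some b → x ≤ y → a ≤ b

/-- Order-reversing partial maps. -/
def orderRev {n : ℕ} (f : PT n) : Prop :=
  ∀ x y a b, f x = some a → f y = some b → x ≤ y → b ≤ a

/-- Monotone partial maps. -/
def isMonotonePT {n : ℕ} (f : PT n) : Prop := orderPres f ∨ orderRev f

/-- The permutation `σ` extends the partial map `f`. -/
def extendsTo {n : ℕ} (σ : Equiv.Perm (Fin n)) (f : PT n) : Prop :=
  ∀ x a, f x = some a → σ x = a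

/-- Membership in the alternating inverse monoid `AI_n`: an injective partial map of
rank `≤ n - 2`, or one that extends to an even permutation. -/
def inAI {n : ℕ} (f : PT n) : Prop :=
  pInj f ∧ (prank f + 2 ≤ n ∨
    ∃ σ : Equiv.Perm (Fin n), σ ∈ alternatingGroup (Fin n) ∧ extendsTo σ f)

/-- `AO_n = AI_n ∩ POI_n`. -/
def AO (n : ℕ) : Set (PT n) := {f | orderPres f ∧ inAI f}

/-- `AM_n = AI_n ∩ PMI_n`. -/
def AM (n : ℕ) : Set (PT n) := {f | isMonotonePT f ∧ inAI f}

/-- Green's `J`-relation relative to a submonoid-like subset `S` (containing the identity):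
`a J b` iff each lies in the two-sided principal ideal of the other. -/
def JRelIn {n : ℕ} (S : Set (PT n)) (a b : PT n) : Prop :=
  (∃ u v, u ∈ S ∧ v ∈ S ∧ a = u * b * v) ∧ (∃ u v, u ∈ S ∧ v ∈ S ∧ b = u * a * v)

-- ==================== auxiliary lemmas ====================
section Aux
variable {n : ℕ}

lemma PT.mul_apply (f g : PT n) (x : Fin n) : (f * g) x = (f x).bind g := rfl

lemma mem_pDom' {f : PT n} {x : Fin n} : x ∈ pDom f ↔ (f x).isSome := by
  simp [pDom]

lemma mem_pDom {f : PT n} {x : Fin n} : x ∈ pDom f ↔ ∃ a, f x = some a := by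
  simp [pDom, Option.isSome_iff_exists]

lemma mem_pIm {f : PT n} {b : Fin n} : b ∈ pIm f ↔ ∃ x, f x = some b := by
  simp [pIm]

lemma card_pIm {f : PT n} (hf : pInj f) : (pIm f).card = (pDom f).card := by
  symm
  apply Finset.card_bij (fun x hx => (f x).get (mem_pDom'.1 hx))
  · intro x hx
    exact mem_pIm.2 ⟨x, (Option.some_get _).symm⟩
  · intro x hx y hy h
    exact hf x y _ ((Option.some_get (mem_pDom'.1 hx)).symm) (by rw [h]; exact (Option.some_get _).symm)
  · intro b hb
    obtain ⟨x, hx⟩ := mem_pIm.1 hb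
    refine ⟨x, mem_pDom.2 ⟨b, hx⟩, ?_⟩
    simp [hx]

lemma strictPT {f : PT n} (hp : orderPres f) (hi : pInj f) {x y a c : Fin n}
    (hx : f x = some a) (hy : f y = some c) (hxy : x < y) : a < c := by
  refine lt_of_le_of_ne (hp _ _ _ _ hx hy hxy.le) fun h => absurd (hi x y a hx (h ▸ hy)) hxy.ne

/-- uniqueness: an order-preserving partial injection is determined by its domain and image -/
lemma pt_ext {f g : PT n} (hfp : orderPres f) (hfi : pInj f) (hgp : orderPres g) (hgi : pInj g)
    (hdom : pDom f = pDom g) (him : pIm f = pIm g) : f = g := by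
  classical
  set s : Finset (Fin n) := pDom f with hs
  have hcard : (pIm f).card = s.card := card_pIm hfi
  have hmemF : ∀ i : Fin s.card, (f (s.orderEmbOfFin rfl i)).isSome := fun i =>
    mem_pDom'.1 (by exact Finset.orderEmbOfFin_mem s rfl i)
  have hmemG : ∀ i : Fin s.card, (g (s.orderEmbOfFin rfl i)).isSome := fun i =>
    mem_pDom'.1 (by rw [← hdom]; exact Finset.orderEmbOfFin_mem s rfl i)
  set F : Fin s.card → Fin n := fun i => (f (s.orderEmbOfFin rfl i)).get (hmemF i) with hF
  set G : Fin s.card → Fin n := fun i => (g (s.orderEmbOfFin rfl i)).get (hmemG i) with hG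
  have hFs : StrictMono F := fun i j hij =>
    strictPT hfp hfi (Option.some_get (hmemF i)).symm (Option.some_get (hmemF j)).symm
      ((s.orderEmbOfFin rfl).strictMono hij)
  have hGs : StrictMono G := fun i j hij =>
    strictPT hgp hgi (Option.some_get (hmemG i)).symm (Option.some_get (hmemG j)).symm
      ((s.orderEmbOfFin rfl).strictMono hij)
  have hFmem : ∀ i, F i ∈ pIm f := fun i => mem_pIm.2 ⟨_, (Option.some_get (hmemF i)).symm⟩
  have hGmem : ∀ i, G i ∈ pIm f := fun i => by
    rw [him]; exact mem_pIm.2 ⟨_, (Option.some_get (hmemG i)).symm⟩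
  have hFeq := Finset.orderEmbOfFin_unique hcard hFmem hFs
  have hGeq := Finset.orderEmbOfFin_unique hcard hGmem hGs
  have hFG : F = G := hFeq.trans hGeq.symm
  funext x
  by_cases hx : x ∈ s
  · obtain ⟨i, hi⟩ : ∃ i, s.orderEmbOfFin rfl i = x := by
      have := Finset.range_orderEmbOfFin s (rfl : s.card = s.card)
      have hx' : x ∈ Set.range (s.orderEmbOfFin rfl) := by rw [this]; exact hx
      exact hx'
    have h1 : f x = some (F i) := by rw [← hi]; exact (Option.some_get (hmemF i)).symm
    have h2 : g x = some (G i) := by rw [← hi]; exact (Option.some_get (hmemG i)).symm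
    rw [h1, h2, hFG]
  · have h1 : f x = none := by
      by_contra h
      exact hx (mem_pDom'.2 (Option.isSome_iff_ne_none.2 h))
    have h2 : g x = none := by
      by_contra h
      exact hx (hdom ▸ mem_pDom'.2 (Option.isSome_iff_ne_none.2 h))
    rw [h1, h2]

lemma exists_erase {s : Finset (Fin n)} (hn : 1 ≤ n) (h : s.card = n - 1) :
    ∃ c, s = Finset.univ.erase c := by
  classical
  have hc : sᶜ.card = 1 := by
    have := Finset.card_compl s
    simp only [Fintype.card_fin] at this
    omega
  obtain ⟨c, hc⟩ := Finset.card_eq_one.1 hc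
  refine ⟨c, ?_⟩
  rw [← Finset.compl_singleton, ← hc, compl_compl]

lemma erase_injective {d e : Fin n} (h : Finset.univ.erase d = Finset.univ.erase e) : d = e := by
  by_contra hne
  have : e ∈ Finset.univ.erase d := Finset.mem_erase.2 ⟨fun h' => hne h'.symm, Finset.mem_univ _⟩
  rw [h] at this
  exact (Finset.mem_erase.1 this).1 rfl

lemma card_erase_univ (d : Fin n) : (Finset.univ.erase d).card = n - 1 := by
  rw [Finset.card_erase_of_mem (Finset.mem_univ _), Finset.card_univ, Fintype.card_fin]

lemma orderPres_mul {f g : PT n} (hf : orderPres f) (hg : orderPres g) : orderPres (f * g) := by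
  intro x y a b hx hy hxy
  rw [PT.mul_apply] at hx hy
  obtain ⟨c, hc, hca⟩ := Option.bind_eq_some_iff.1 hx
  obtain ⟨d, hd, hdb⟩ := Option.bind_eq_some_iff.1 hy
  exact hg _ _ _ _ hca hdb (hf _ _ _ _ hc hd hxy)

lemma pInj_mul {f g : PT n} (hf : pInj f) (hg : pInj g) : pInj (f * g) := by
  intro x y a hx hy
  rw [PT.mul_apply] at hx hy
  obtain ⟨c, hc, hca⟩ := Option.bind_eq_some_iff.1 hx
  obtain ⟨d, hd, hdb⟩ := Option.bind_eq_some_iff.1 hy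
  have := hg _ _ _ hca hdb
  subst this
  exact hf _ _ _ hc hd

lemma pDom_mul_subset (f g : PT n) : pDom (f * g) ⊆ pDom f := by
  intro x hx
  obtain ⟨a, ha⟩ := mem_pDom.1 hx
  rw [PT.mul_apply] at ha
  obtain ⟨c, hc, -⟩ := Option.bind_eq_some_iff.1 ha
  exact mem_pDom.2 ⟨c, hc⟩

lemma pIm_mul_subset (f g : PT n) : pIm (f * g) ⊆ pIm g := by
  intro b hb
  obtain ⟨x, hx⟩ := mem_pIm.1 hb
  rw [PT.mul_apply] at hx
  obtain ⟨c, -, hc⟩ := Option.bind_eq_some_iff.1 hx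
  exact mem_pIm.2 ⟨c, hc⟩

/-- a total order-preserving injection on `Fin n` is the identity -/
lemma total_eq_id {f : PT n} (hp : orderPres f) (hi : pInj f) (hd : pDom f = Finset.univ) :
    ∀ x, f x = some x := by
  have hmem : ∀ x : Fin n, (f x).isSome := fun x =>
    mem_pDom'.1 (by rw [hd]; exact Finset.mem_univ x)
  set F : Fin n → Fin n := fun x => (f x).get (hmem x) with hF
  have hFs : StrictMono F := fun i j hij =>
    strictPT hp hi (Option.some_get (hmem i)).symm (Option.some_get (hmem j)).symm hij
  have hcard : (Finset.univ : Finset (Fin n)).card = n := by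
    rw [Finset.card_univ, Fintype.card_fin]
  have h1 : F = (Finset.univ : Finset (Fin n)).orderEmbOfFin hcard :=
    Finset.orderEmbOfFin_unique hcard (fun x => Finset.mem_univ _) hFs
  have h2 : (id : Fin n → Fin n) = (Finset.univ : Finset (Fin n)).orderEmbOfFin hcard :=
    Finset.orderEmbOfFin_unique hcard (fun x => Finset.mem_univ _) strictMono_id
  have : F = id := h1.trans h2.symm
  intro x
  have hx : f x = some (F x) := (Option.some_get (hmem x)).symm
  rw [hx, this]; rfl

end Aux
-- ==================== the interval-cycle permutation ====================
section Rho
variable {m : ℕ}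

/-- the cycle `(d d+1 ... e)` on `Fin (m+1)`, for `d ≤ e`: sends `x ↦ x+1` for `d ≤ x < e`,
`e ↦ d`, fixes everything else. -/
def rr (d e : Fin (m + 1)) : Equiv.Perm (Fin (m + 1)) :=
  (Equiv.addRight d) * Fin.cycleRange ⟨e.val - d.val, Nat.lt_of_le_of_lt (Nat.sub_le _ _) e.isLt⟩ *
    (Equiv.addRight d)⁻¹

lemma rr_apply (d e x : Fin (m + 1)) :
    rr d e x = Fin.cycleRange ⟨e.val - d.val, Nat.lt_of_le_of_lt (Nat.sub_le _ _) e.isLt⟩ (x - d) + d := by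
  simp [rr, Equiv.Perm.mul_apply, sub_eq_add_neg]

lemma sub_val_of_le {d x : Fin (m + 1)} (h : d.val ≤ x.val) : (x - d).val = x.val - d.val := by
  rw [Fin.coe_sub_iff_le.2 (Fin.le_def.2 h)]

lemma sub_val_of_gt {d x : Fin (m + 1)} (h : x.val < d.val) :
    (x - d).val = x.val + (m + 1) - d.val := by
  rw [Fin.sub_def]
  simp only
  rw [Nat.mod_eq_of_lt (by omega)]
  omega

lemma rr_of_lt {d e x : Fin (m + 1)} (hde : d.val ≤ e.val) (h : x.val < d.val) : rr d e x = x := by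
  rw [rr_apply]
  have h1 : (x - d).val = x.val + (m + 1) - d.val := sub_val_of_gt h
  rw [Fin.cycleRange_of_gt (by rw [Fin.lt_def]; simp only [h1]; omega)]
  exact sub_add_cancel x d

lemma rr_of_gt {d e x : Fin (m + 1)} (hde : d.val ≤ e.val) (h : e.val < x.val) : rr d e x = x := by
  rw [rr_apply]
  have h1 : (x - d).val = x.val - d.val := sub_val_of_le (by omega)
  rw [Fin.cycleRange_of_gt (by rw [Fin.lt_def]; simp only [h1]; omega)]
  exact sub_add_cancel x d

lemma rr_last {d e : Fin (m + 1)} (hde : d.val ≤ e.val) : rr d e e = d := by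
  rw [rr_apply]
  have h1 : e - d = ⟨e.val - d.val, Nat.lt_of_le_of_lt (Nat.sub_le _ _) e.isLt⟩ :=
    Fin.ext (sub_val_of_le hde)
  rw [h1, Fin.cycleRange_self, zero_add]

lemma rr_mid {d e x : Fin (m + 1)} (hdx : d.val ≤ x.val) (hxe : x.val < e.val) :
    rr d e x = ⟨x.val + 1, by omega⟩ := by
  rw [rr_apply]
  have h1 : (x - d).val = x.val - d.val := sub_val_of_le hdx
  rw [Fin.cycleRange_of_lt (by rw [Fin.lt_def]; simp only [h1]; omega)]
  have hm : 1 ≤ m := by omega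
  have hone : (1 : Fin (m + 1)).val = 1 := by
    rw [Fin.val_one']; exact Nat.mod_eq_of_lt (by omega)
  have s1 : ((x - d) + 1).val = x.val - d.val + 1 := by
    rw [Fin.val_add_eq_of_add_lt (by rw [h1, hone]; omega), h1, hone]
  have s2 : ((x - d) + 1 + d).val = x.val + 1 := by
    rw [Fin.val_add_eq_of_add_lt (by rw [s1]; omega), s1]; omega
  exact Fin.ext s2

lemma sign_rr (d e : Fin (m + 1)) :
    Equiv.Perm.sign (rr d e) = (-1 : ℤˣ) ^ (e.val - d.val) := by
  have key : ∀ s t : ℤˣ, s * t * s⁻¹ = t := fun s t => by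
    rw [mul_comm s t, mul_assoc, mul_inv_cancel, mul_one]
  rw [rr, map_mul, map_mul, map_inv, key, Fin.sign_cycleRange]

/-- the permutation sending `d ↦ e` and the unique order-isomorphism
`{0..n-1} \ {d} → {0..n-1} \ {e}` elsewhere. -/
def rho (d e : Fin (m + 1)) : Equiv.Perm (Fin (m + 1)) :=
  if d.val ≤ e.val then (rr d e)⁻¹ else rr e d

lemma rho_d (d e : Fin (m + 1)) : rho d e d = e := by
  unfold rho
  split_ifs with h
  · rw [Equiv.Perm.inv_eq_iff_eq, rr_last h]
  · exact rr_last (by omega)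

lemma sign_rho (d e : Fin (m + 1)) :
    Equiv.Perm.sign (rho d e) = (-1 : ℤˣ) ^ (d.val + e.val) := by
  have pow_eq : ∀ p q : ℕ, p % 2 = q % 2 → ((-1 : ℤˣ)) ^ p = (-1) ^ q := by
    intro p q h
    rw [← Nat.div_add_mod p 2, ← Nat.div_add_mod q 2, pow_add, pow_add, pow_mul, pow_mul]
    simp [h]
  unfold rho
  split_ifs with h
  · rw [map_inv, sign_rr]
    rw [← inv_pow, inv_neg, inv_one]
    exact pow_eq _ _ (by omega)
  · rw [sign_rr]
    exact pow_eq _ _ (by omega)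

lemma rho_apply_of_ne {d e x : Fin (m + 1)} (hx : x ≠ d) :
    (rho d e x).val =
      if d.val < x.val ∧ x.val ≤ e.val then x.val - 1
      else if e.val ≤ x.val ∧ x.val < d.val then x.val + 1
      else x.val := by
  have hxd : x.val ≠ d.val := fun h => hx (Fin.ext h)
  unfold rho
  split_ifs with hde h1 h2
  · -- d ≤ e, d < x ≤ e : value x-1
    have hy : rr d e ⟨x.val - 1, by omega⟩ = x := by
      rcases Nat.lt_or_ge (x.val - 1) e.val with h' | h'
      · rw [rr_mid (by simp; omega) (by simpa using h')]
        exact Fin.ext (by simp; omega)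
      · -- x - 1 ≥ e and x ≤ e means x = e, x - 1 = e - 1... impossible unless x = e ∧ x-1 ≥ e
        omega
    rw [show (rr d e)⁻¹ x = ⟨x.val - 1, by omega⟩ from by rw [Equiv.Perm.inv_eq_iff_eq, hy]]
  · -- d ≤ e, second condition: e ≤ x < d impossible
    omega
  · -- d ≤ e, outside: x < d or x > e
    have : x.val < d.val ∨ e.val < x.val := by omega
    have hfix : rr d e x = x := by
      rcases this with h' | h'
      · exact rr_of_lt hde h'
      · exact rr_of_gt hde h'
    rw [show (rr d e)⁻¹ x = x from by rw [Equiv.Perm.inv_eq_iff_eq, hfix]]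
  · -- e < d, first condition impossible
    omega
  · -- e < d, e ≤ x < d : value x+1
    rw [rr_mid (by omega) (by omega)]
  · -- e < d, outside: x < e or x > d
    have : x.val < e.val ∨ d.val < x.val := by omega
    rcases this with h' | h'
    · rw [rr_of_lt (by omega) h']
    · rw [rr_of_gt (by omega) h']

lemma rho_strictMono {d e x y : Fin (m + 1)} (hx : x ≠ d) (hy : y ≠ d) (hxy : x < y) :
    rho d e x < rho d e y := by
  have h1 := rho_apply_of_ne (e := e) hx
  have h2 := rho_apply_of_ne (e := e) hy
  rw [Fin.lt_def] at hxy ⊢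
  have hxd : x.val ≠ d.val := fun h => hx (Fin.ext h)
  have hyd : y.val ≠ d.val := fun h => hy (Fin.ext h)
  rw [h1, h2]
  split_ifs <;> omega

end Rho
-- ==================== the canonical rank n-1 elements ====================
section Pshift
variable {m : ℕ}

/-- the canonical order-preserving partial injection with domain `univ \ {d}` and
image `univ \ {e}`. -/
def pshift (d e : Fin (m + 1)) : PT (m + 1) :=
  fun x => if x = d then none else some (rho d e x)

lemma pDom_pshift (d e : Fin (m + 1)) : pDom (pshift d e) = Finset.univ.erase d := by
  ext x
  rw [mem_pDom, Finset.mem_erase]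
  constructor
  · rintro ⟨a, ha⟩
    refine ⟨fun h => ?_, Finset.mem_univ _⟩
    rw [pshift, if_pos h] at ha
    cases ha
  · rintro ⟨h, -⟩
    exact ⟨rho d e x, by rw [pshift, if_neg h]⟩

lemma pIm_pshift (d e : Fin (m + 1)) : pIm (pshift d e) = Finset.univ.erase e := by
  ext b
  rw [mem_pIm, Finset.mem_erase]
  constructor
  · rintro ⟨x, hx⟩
    by_cases h : x = d
    · rw [pshift, if_pos h] at hx; cases hx
    · rw [pshift, if_neg h] at hx
      refine ⟨fun hbe => h ?_, Finset.mem_univ _⟩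
      apply (rho d e).injective
      rw [Option.some_inj.1 hx, hbe, rho_d]
  · rintro ⟨hbe, -⟩
    refine ⟨(rho d e).symm b, ?_⟩
    have hne : (rho d e).symm b ≠ d := by
      intro h
      apply hbe
      have : rho d e ((rho d e).symm b) = rho d e d := by rw [h]
      rw [Equiv.apply_symm_apply, rho_d] at this
      exact this
    rw [pshift, if_neg hne, Equiv.apply_symm_apply]

lemma pInj_pshift (d e : Fin (m + 1)) : pInj (pshift d e) := by
  intro x y a hx hy
  rw [pshift] at hx hy
  split_ifs at hx hy with h1 h2
  apply (rho d e).injective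
  rw [Option.some_inj.1 hx, Option.some_inj.1 hy]

lemma orderPres_pshift (d e : Fin (m + 1)) : orderPres (pshift d e) := by
  intro x y a b hx hy hxy
  rw [pshift] at hx hy
  split_ifs at hx hy with h1 h2
  rcases eq_or_lt_of_le hxy with rfl | hlt
  · rw [hx] at hy; exact le_of_eq (Option.some_inj.1 hy)
  · rw [← Option.some_inj.1 hx, ← Option.some_inj.1 hy]
    exact (rho_strictMono h1 h2 hlt).le

lemma extendsTo_rho_pshift (d e : Fin (m + 1)) : extendsTo (rho d e) (pshift d e) := by
  intro x a hx
  rw [pshift] at hx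
  split_ifs at hx with h
  exact Option.some_inj.1 hx

lemma rho_mem_alternating_iff (d e : Fin (m + 1)) :
    rho d e ∈ alternatingGroup (Fin (m + 1)) ↔ d.val % 2 = e.val % 2 := by
  rw [Equiv.Perm.mem_alternatingGroup, sign_rho]
  rw [neg_one_pow_eq_one_iff_even (by decide)]
  rw [Nat.even_add]
  simp only [Nat.even_iff]
  omega

lemma pshift_mem_AO {d e : Fin (m + 1)} (h : d.val % 2 = e.val % 2) :
    pshift d e ∈ AO (m + 1) :=
  ⟨orderPres_pshift d e, pInj_pshift d e,
    Or.inr ⟨rho d e, (rho_mem_alternating_iff d e).2 h, extendsTo_rho_pshift d e⟩⟩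

/-- KEY PARITY LEMMA: for a rank-`m` element of `AO (m+1)`, the missing domain point and the
missing image point have the same parity. -/
lemma parity_dom_im {f : PT (m + 1)} (hf : f ∈ AO (m + 1)) {d e : Fin (m + 1)}
    (hd : pDom f = Finset.univ.erase d) (he : pIm f = Finset.univ.erase e) :
    d.val % 2 = e.val % 2 := by
  obtain ⟨hp, hi, hAI⟩ := hf
  -- f is the canonical pshift
  have hfeq : f = pshift d e :=
    pt_ext hp hi (orderPres_pshift d e) (pInj_pshift d e)
      (by rw [hd, pDom_pshift]) (by rw [he, pIm_pshift])
  -- the rank condition fails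
  have hrank : prank f = m := by
    rw [prank, hd, card_erase_univ]; omega
  rcases hAI with hle | ⟨σ, hσalt, hσext⟩
  · omega
  -- σ must equal rho d e
  have hσd : σ d = e := by
    by_contra hne
    have : σ d ∈ pIm f := by
      rw [he, Finset.mem_erase]; exact ⟨hne, Finset.mem_univ _⟩
    obtain ⟨x, hx⟩ := mem_pIm.1 this
    have hxd : x ≠ d := by
      intro h
      rw [h, hfeq, pshift, if_pos rfl] at hx
      cases hx
    have := hσext x _ hx
    exact hxd (σ.injective this)
  have hσrho : σ = rho d e := by
    apply Equiv.ext
    intro x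
    by_cases hx : x = d
    · rw [hx, hσd, rho_d]
    · have hfx : f x = some (rho d e x) := by rw [hfeq, pshift, if_neg hx]
      exact hσext x _ hfx
  rw [hσrho] at hσalt
  exact (rho_mem_alternating_iff d e).1 hσalt

end Pshift
-- ==================== main argument ====================
section Main
variable {m : ℕ}

lemma forward_parity {a b u v : PT (m + 1)} (hu : u ∈ AO (m + 1))
    (hab : a = u * b * v) {da db : Fin (m + 1)}
    (hda : pDom a = Finset.univ.erase da) (hdb : pDom b = Finset.univ.erase db) :
    da.val % 2 = db.val % 2 := by
  have key : ∀ x, a x = ((u x).bind b).bind v := fun x => by rw [hab]; rfl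
  have hsub : Finset.univ.erase da ⊆ pDom u := by
    intro x hx
    rw [← hda] at hx
    obtain ⟨c, hc⟩ := mem_pDom.1 hx
    rw [key] at hc
    obtain ⟨y, hy, -⟩ := Option.bind_eq_some_iff.1 hc
    obtain ⟨z, hz, -⟩ := Option.bind_eq_some_iff.1 hy
    exact mem_pDom.2 ⟨z, hz⟩
  by_cases hdu : da ∈ pDom u
  · -- u is total, hence the identity
    have hutot : pDom u = Finset.univ := by
      apply Finset.eq_univ_of_forall
      intro x
      by_cases h : x = da
      · rw [h]; exact hdu
      · exact hsub (Finset.mem_erase.2 ⟨h, Finset.mem_univ _⟩)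
    have huid := total_eq_id hu.1 hu.2.1 hutot
    have hsub2 : Finset.univ.erase da ⊆ Finset.univ.erase db := by
      intro x hx
      rw [← hda] at hx
      obtain ⟨c, hc⟩ := mem_pDom.1 hx
      rw [key, huid x] at hc
      simp only [Option.bind_some] at hc
      obtain ⟨z, hz, -⟩ := Option.bind_eq_some_iff.1 hc
      rw [← hdb]
      exact mem_pDom.2 ⟨z, hz⟩
    have heq : Finset.univ.erase da = Finset.univ.erase db :=
      Finset.eq_of_subset_of_card_le hsub2 (by rw [card_erase_univ, card_erase_univ])
    rw [erase_injective heq]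
  · -- u has rank m with missing domain point da
    have hdomu : pDom u = Finset.univ.erase da := by
      apply Finset.Subset.antisymm _ hsub
      intro x hx
      refine Finset.mem_erase.2 ⟨fun h => hdu (h ▸ hx), Finset.mem_univ _⟩
    obtain ⟨eu, himu⟩ : ∃ eu, pIm u = Finset.univ.erase eu := by
      apply exists_erase (by omega)
      rw [card_pIm hu.2.1, hdomu, card_erase_univ]
    have hpar1 : da.val % 2 = eu.val % 2 := parity_dom_im hu hdomu himu
    -- the image of u is contained in the domain of b
    have hsub3 : Finset.univ.erase eu ⊆ Finset.univ.erase db := by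
      intro c hc
      rw [← himu] at hc
      obtain ⟨x, hx⟩ := mem_pIm.1 hc
      have hxda : x ∈ Finset.univ.erase da := by rw [← hdomu]; exact mem_pDom.2 ⟨c, hx⟩
      rw [← hda] at hxda
      obtain ⟨w, hw⟩ := mem_pDom.1 hxda
      rw [key, hx] at hw
      simp only [Option.bind_some] at hw
      obtain ⟨z, hz, -⟩ := Option.bind_eq_some_iff.1 hw
      rw [← hdb]
      exact mem_pDom.2 ⟨z, hz⟩
    have heq : Finset.univ.erase eu = Finset.univ.erase db :=
      Finset.eq_of_subset_of_card_le hsub3 (by rw [card_erase_univ, card_erase_univ])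
    rw [hpar1, erase_injective heq]

lemma backward_half {a b : PT (m + 1)} (ha : a ∈ AO (m + 1)) (hb : b ∈ AO (m + 1))
    {da db : Fin (m + 1)}
    (hda : pDom a = Finset.univ.erase da) (hdb : pDom b = Finset.univ.erase db)
    (hpar : da.val % 2 = db.val % 2) :
    ∃ u v, u ∈ AO (m + 1) ∧ v ∈ AO (m + 1) ∧ a = u * b * v := by
  obtain ⟨ea, hea⟩ : ∃ ea, pIm a = Finset.univ.erase ea := by
    apply exists_erase (by omega)
    rw [card_pIm ha.2.1, hda, card_erase_univ]
  obtain ⟨eb, heb⟩ : ∃ eb, pIm b = Finset.univ.erase eb := by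
    apply exists_erase (by omega)
    rw [card_pIm hb.2.1, hdb, card_erase_univ]
  have hpa : da.val % 2 = ea.val % 2 := parity_dom_im ha hda hea
  have hpb : db.val % 2 = eb.val % 2 := parity_dom_im hb hdb heb
  refine ⟨pshift da db, pshift eb ea, pshift_mem_AO hpar, pshift_mem_AO (by omega), ?_⟩
  set u := pshift da db with hu
  set v := pshift eb ea with hv
  set w := u * b * v with hw
  have hwapp : ∀ x, w x = ((u x).bind b).bind v := fun x => rfl
  -- the composition is everywhere defined off da
  have hwdom : pDom w = Finset.univ.erase da := by
    apply Finset.Subset.antisymm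
    · intro x hx
      have hx1 : x ∈ pDom u := pDom_mul_subset _ _ (pDom_mul_subset _ _ hx)
      rwa [hu, pDom_pshift] at hx1
    · intro x hx
      have hxda : x ≠ da := (Finset.mem_erase.1 hx).1
      have h1 : u x = some (rho da db x) := by rw [hu, pshift, if_neg hxda]
      have h2 : rho da db x ∈ pDom b := by
        rw [hdb, Finset.mem_erase]
        refine ⟨fun h => hxda ?_, Finset.mem_univ _⟩
        apply (rho da db).injective
        rw [h, rho_d]
      obtain ⟨c, hc⟩ := mem_pDom.1 h2
      have h3 : c ∈ pDom v := by
        rw [hv, pDom_pshift, ← heb]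
        exact mem_pIm.2 ⟨_, hc⟩
      obtain ⟨c', hc'⟩ := mem_pDom.1 h3
      apply mem_pDom.2 ⟨c', _⟩
      rw [hwapp, h1]
      simp only [Option.bind_some]
      rw [hc]
      simp only [Option.bind_some]
      exact hc'
  have hwp : orderPres w := orderPres_mul (orderPres_mul (orderPres_pshift _ _) hb.1) (orderPres_pshift _ _)
  have hwi : pInj w := pInj_mul (pInj_mul (pInj_pshift _ _) hb.2.1) (pInj_pshift _ _)
  have hwim : pIm w = Finset.univ.erase ea := by
    apply Finset.eq_of_subset_of_card_le
    · intro y hy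
      have := pIm_mul_subset (u * b) v hy
      rwa [hv, pIm_pshift] at this
    · rw [card_erase_univ, card_pIm hwi, hwdom, card_erase_univ]
  exact pt_ext ha.1 ha.2.1 hwp hwi (by rw [hda, hwdom]) (by rw [hea, hwim])

end Main

/-- rank `n-1` elements of `AO_n` are `J`-related iff their missing domain
elements have the same parity. -/
theorem stmt3 {n : ℕ} (hn : 2 ≤ n) (a b : PT n) (ha : a ∈ AO n) (hb : b ∈ AO n)
    (da db : Fin n) (hda : pDom a = Finset.univ.erase da) (hdb : pDom b = Finset.univ.erase db) :
    JRelIn (AO n) a b ↔ da.val % 2 = db.val % 2 := by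
  obtain ⟨m, rfl⟩ : ∃ m, n = m + 1 := ⟨n - 1, by omega⟩
  constructor
  · rintro ⟨⟨u, v, hu, -, hab⟩, -⟩
    exact forward_parity hu hab hda hdb
  · intro hpar
    exact ⟨backward_half ha hb hda hdb hpar, backward_half hb ha hdb hda hpar.symm⟩
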